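/- arXiv:2011.00854 — 2 statements merged into one kernel-verified Lean document; each statement's English description precedes it below -/
import Mathlib

section
/- Suppose a sequence Δ_0, Δ_1, …, Δ_k of positive reals satisfies Δ_{i+1} ≤ γ_3 Δ_i for i in a set S_k ⊆ {0,…,k−1} and Δ_{i+1} ≤ γ_2 Δ_i for i in the complement U_k = {0,…,k−1} \ S_k, where 0 < γ_2 < 1 < γ_3. If Δ_k ≥ Δ_min for some Δ_min ∈ (0, Δ_0], then k ≤ |S_k|·(1 + log γ_3 / |log γ_2|) + (1/|log γ_2|)·|log(Δ_min/Δ_0)|. -/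
open Finset

theorem iteration_count_bound (k : ℕ) (Δ : ℕ → ℝ) (hΔpos : ∀ i ≤ k, 0 < Δ i)
    (γ₂ γ₃ : ℝ) (hγ₂0 : 0 < γ₂) (hγ₂1 : γ₂ < 1) (hγ₃ : 1 < γ₃)
    (S : Finset ℕ) (hS : S ⊆ Finset.range k)
    (hsucc : ∀ i ∈ S, Δ (i + 1) ≤ γ₃ * Δ i)
    (hunsucc : ∀ i ∈ Finset.range k \ S, Δ (i + 1) ≤ γ₂ * Δ i)
    (Δmin : ℝ) (hΔmin0 : 0 < Δmin) (hΔmin : Δmin ≤ Δ 0) (hk : Δmin ≤ Δ k) :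
    (k : ℝ) ≤ (S.card : ℝ) * (1 + Real.log γ₃ / |Real.log γ₂|)
      + (1 / |Real.log γ₂|) * |Real.log (Δmin / Δ 0)| := by
  have hγ₃0 : (0:ℝ) < γ₃ := lt_trans one_pos hγ₃
  have hΔ0 : 0 < Δ 0 := hΔpos 0 (Nat.zero_le k)
  have hcard : ∀ n : ℕ, (S ∩ Finset.range n).card ≤ n := fun n => by
    calc (S ∩ Finset.range n).card ≤ (Finset.range n).card :=
          Finset.card_le_card Finset.inter_subset_right
      _ = n := Finset.card_range n
  have key : ∀ n ≤ k, Δ n ≤ γ₃ ^ (S ∩ Finset.range n).card *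
      γ₂ ^ (n - (S ∩ Finset.range n).card) * Δ 0 := by
    intro n
    induction n with
    | zero => intro _; simp
    | succ m ih =>
      intro hm
      have hm' : m ≤ k := Nat.le_of_succ_le hm
      have hmk : m < k := hm
      have ihm := ih hm'
      have hΔm : 0 < Δ m := hΔpos m hm'
      have hc := hcard m
      have hpow2 : (0:ℝ) ≤ γ₂ ^ (m - (S ∩ Finset.range m).card) := le_of_lt (pow_pos hγ₂0 _)
      have hpow3 : (0:ℝ) ≤ γ₃ ^ (S ∩ Finset.range m).card := le_of_lt (pow_pos hγ₃0 _)
      by_cases hmem : m ∈ S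
      · have hins : S ∩ Finset.range (m+1) = insert m (S ∩ Finset.range m) := by
          ext x
          simp only [Finset.mem_inter, Finset.mem_range, Finset.mem_insert, Nat.lt_succ_iff_lt_or_eq]
          constructor
          · rintro ⟨hx, hlt | rfl⟩
            · exact Or.inr ⟨hx, hlt⟩
            · exact Or.inl rfl
          · rintro (rfl | ⟨hx, hlt⟩)
            · exact ⟨hmem, Or.inr rfl⟩
            · exact ⟨hx, Or.inl hlt⟩
        have hnotmem : m ∉ S ∩ Finset.range m := by simp
        have hcardins : (S ∩ Finset.range (m+1)).card = (S ∩ Finset.range m).card + 1 := by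
          rw [hins, Finset.card_insert_of_notMem hnotmem]
        have h1 : Δ (m + 1) ≤ γ₃ * Δ m := hsucc m hmem
        have h2 : γ₃ * Δ m ≤ γ₃ * (γ₃ ^ (S ∩ Finset.range m).card *
            γ₂ ^ (m - (S ∩ Finset.range m).card) * Δ 0) :=
          mul_le_mul_of_nonneg_left ihm (le_of_lt hγ₃0)
        rw [hcardins]
        have hsub : m + 1 - ((S ∩ Finset.range m).card + 1) = m - (S ∩ Finset.range m).card := by
          omega
        rw [hsub]
        calc Δ (m+1) ≤ γ₃ * (γ₃ ^ (S ∩ Finset.range m).card *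
              γ₂ ^ (m - (S ∩ Finset.range m).card) * Δ 0) := le_trans h1 h2
          _ = γ₃ ^ ((S ∩ Finset.range m).card + 1) *
              γ₂ ^ (m - (S ∩ Finset.range m).card) * Δ 0 := by ring
      · have heq : S ∩ Finset.range (m+1) = S ∩ Finset.range m := by
          ext x
          simp only [Finset.mem_inter, Finset.mem_range, Nat.lt_succ_iff_lt_or_eq]
          constructor
          · rintro ⟨hx, hlt | rfl⟩
            · exact ⟨hx, hlt⟩
            · exact absurd hx hmem
          · rintro ⟨hx, hlt⟩
            exact ⟨hx, Or.inl hlt⟩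
        have h1 : Δ (m + 1) ≤ γ₂ * Δ m := hunsucc m (by
          simp only [Finset.mem_sdiff, Finset.mem_range]; exact ⟨hmk, hmem⟩)
        have h2 : γ₂ * Δ m ≤ γ₂ * (γ₃ ^ (S ∩ Finset.range m).card *
            γ₂ ^ (m - (S ∩ Finset.range m).card) * Δ 0) :=
          mul_le_mul_of_nonneg_left ihm (le_of_lt hγ₂0)
        rw [heq]
        have hsub : m + 1 - (S ∩ Finset.range m).card = (m - (S ∩ Finset.range m).card) + 1 := by
          omega
        rw [hsub]
        calc Δ (m+1) ≤ γ₂ * (γ₃ ^ (S ∩ Finset.range m).card *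
              γ₂ ^ (m - (S ∩ Finset.range m).card) * Δ 0) := le_trans h1 h2
          _ = γ₃ ^ (S ∩ Finset.range m).card *
              γ₂ ^ ((m - (S ∩ Finset.range m).card) + 1) * Δ 0 := by ring
  have hSk : S ∩ Finset.range k = S := Finset.inter_eq_left.mpr hS
  have hak : S.card ≤ k := by
    calc S.card ≤ (Finset.range k).card := Finset.card_le_card hS
      _ = k := Finset.card_range k
  have hfin : Δmin ≤ γ₃ ^ S.card * γ₂ ^ (k - S.card) * Δ 0 := by
    have := key k le_rfl
    rw [hSk] at this
    exact le_trans hk this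
  -- take logs
  have hrpos : (0:ℝ) < γ₃ ^ S.card * γ₂ ^ (k - S.card) * Δ 0 :=
    mul_pos (mul_pos (pow_pos hγ₃0 _) (pow_pos hγ₂0 _)) hΔ0
  have hlog : Real.log Δmin ≤ (S.card : ℝ) * Real.log γ₃ +
      ((k : ℝ) - S.card) * Real.log γ₂ + Real.log (Δ 0) := by
    have h := Real.log_le_log hΔmin0 hfin
    rw [Real.log_mul (by positivity) (ne_of_gt hΔ0),
        Real.log_mul (by positivity) (by positivity),
        Real.log_pow, Real.log_pow] at h
    have hcast : ((k - S.card : ℕ) : ℝ) = (k : ℝ) - S.card := by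
      rw [Nat.cast_sub hak]
    rw [hcast] at h
    linarith
  have hL : Real.log γ₂ < 0 := Real.log_neg hγ₂0 hγ₂1
  have hG : 0 < Real.log γ₃ := Real.log_pos hγ₃
  have habsL : |Real.log γ₂| = -Real.log γ₂ := abs_of_neg hL
  have hlogq : Real.log (Δmin / Δ 0) = Real.log Δmin - Real.log (Δ 0) :=
    Real.log_div (ne_of_gt hΔmin0) (ne_of_gt hΔ0)
  have hlogq_nonpos : Real.log (Δmin / Δ 0) ≤ 0 := by
    apply Real.log_nonpos
    · positivity
    · rw [div_le_one hΔ0]; exact hΔmin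
  have habsq : |Real.log (Δmin / Δ 0)| = Real.log (Δ 0) - Real.log Δmin := by
    rw [abs_of_nonpos hlogq_nonpos, hlogq]; ring
  rw [habsL, habsq]
  set M := -Real.log γ₂ with hM
  have hMpos : 0 < M := by simp [hM]; linarith
  rw [← mul_le_mul_iff_of_pos_right hMpos]
  have hexp : ((S.card : ℝ) * (1 + Real.log γ₃ / M) +
      1 / M * (Real.log (Δ 0) - Real.log Δmin)) * M =
      (S.card : ℝ) * M + (S.card : ℝ) * Real.log γ₃ +
      (Real.log (Δ 0) - Real.log Δmin) := by
    field_simp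
  rw [hexp]
  have : ((k : ℝ) - S.card) * Real.log γ₂ ≥ Real.log Δmin - Real.log (Δ 0) -
      (S.card : ℝ) * Real.log γ₃ := by linarith
  nlinarith [this]
end

section
/- Suppose for each ℓ ∈ {1,…,j} the ℓ-th derivative approximation error satisfies ‖∇̄^ℓ f(x) − ∇^ℓ f(x)‖ ≤ (ω/(3‖s‖^ℓ))·ΔT̄_{f,j}(x,s), where ΔT̄_{f,j}(x,s) > 0, ω ∈ (0,1), and 0 < ‖s‖. Then |ΔT̄_{f,j}(x,s) − ΔT_{f,j}(x,s)| ≤ (1/3)(Σ_{ℓ=1}^j 1/ℓ!)·ω·ΔT̄_{f,j}(x,s) < ω·ΔT̄_{f,j}(x,s). -/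
open Finset

lemma aux_two_pow_le_factorial (k : ℕ) : 2 ^ k ≤ Nat.factorial (k + 1) := by
  induction k with
  | zero => simp
  | succ m ih =>
    rw [pow_succ, Nat.factorial_succ]
    calc 2 ^ m * 2 ≤ Nat.factorial (m + 1) * (m + 2) := Nat.mul_le_mul ih (by omega)
      _ = (m + 2) * Nat.factorial (m + 1) := Nat.mul_comm _ _

theorem derivativewise_accuracy_bound (n j : ℕ) (hj : 1 ≤ j)
    (A B : (ℓ : ℕ) → ContinuousMultilinearMap ℝ (fun _ : Fin ℓ => EuclideanSpace ℝ (Fin n)) ℝ)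
    (s : EuclideanSpace ℝ (Fin n)) (hs : 0 < ‖s‖)
    (ω : ℝ) (hω0 : 0 < ω) (hω1 : ω < 1)
    (ΔT ΔTb : ℝ)
    (hΔT : ΔT = -∑ ℓ ∈ Finset.Icc 1 j, (1 / (Nat.factorial ℓ : ℝ)) * A ℓ (fun _ => s))
    (hΔTb : ΔTb = -∑ ℓ ∈ Finset.Icc 1 j, (1 / (Nat.factorial ℓ : ℝ)) * B ℓ (fun _ => s))
    (hΔTbpos : 0 < ΔTb)
    (herr : ∀ ℓ ∈ Finset.Icc 1 j, ‖B ℓ - A ℓ‖ ≤ (ω / (3 * ‖s‖ ^ ℓ)) * ΔTb) :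
    |ΔTb - ΔT| ≤ (1 / 3) * (∑ ℓ ∈ Finset.Icc 1 j, 1 / (Nat.factorial ℓ : ℝ)) * ω * ΔTb ∧
    (1 / 3) * (∑ ℓ ∈ Finset.Icc 1 j, 1 / (Nat.factorial ℓ : ℝ)) * ω * ΔTb < ω * ΔTb := by
  have hsum_lt3 : (∑ ℓ ∈ Finset.Icc 1 j, 1 / (Nat.factorial ℓ : ℝ)) < 3 := by
    calc (∑ ℓ ∈ Finset.Icc 1 j, 1 / (Nat.factorial ℓ : ℝ))
        ≤ ∑ ℓ ∈ Finset.Icc 1 j, (1/2 : ℝ) ^ (ℓ - 1) := by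
          apply Finset.sum_le_sum
          intro ℓ hℓ
          rw [div_pow, one_pow]
          apply one_div_le_one_div_of_le (by positivity)
          have h1 := aux_two_pow_le_factorial (ℓ - 1)
          rw [Nat.sub_add_cancel (Finset.mem_Icc.mp hℓ).1] at h1
          exact_mod_cast h1
      _ = ∑ i ∈ Finset.range j, (1/2 : ℝ) ^ i := by
          rw [show Finset.Icc 1 j = Finset.Ico 1 (j+1) by rfl]
          rw [Finset.sum_Ico_eq_sum_range]
          simp
      _ < 3 := by
          calc ∑ i ∈ Finset.range j, (1/2 : ℝ) ^ i ≤ 2 := by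
                have h : ∑ i ∈ Finset.range j, (1/2 : ℝ) ^ i = (1 - (1/2)^j) / (1 - 1/2) := by
                  rw [geom_sum_eq (by norm_num)]
                  ring_nf
                rw [h, div_le_iff₀ (by norm_num : (0:ℝ) < 1 - 1/2)]
                have : (0:ℝ) ≤ (1/2:ℝ)^j := by positivity
                linarith
            _ < 3 := by norm_num
  have hsum_pos : (0:ℝ) < ∑ ℓ ∈ Finset.Icc 1 j, 1 / (Nat.factorial ℓ : ℝ) := by
    apply Finset.sum_pos
    · intro ℓ _; positivity
    · exact Finset.nonempty_Icc.mpr hj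
  constructor
  · have key : ΔTb - ΔT = ∑ ℓ ∈ Finset.Icc 1 j,
        (1 / (Nat.factorial ℓ : ℝ)) * (A ℓ (fun _ => s) - B ℓ (fun _ => s)) := by
      rw [hΔT, hΔTb, neg_sub_neg, ← Finset.sum_sub_distrib]
      exact Finset.sum_congr rfl fun ℓ _ => by ring
    rw [key]
    calc |∑ ℓ ∈ Finset.Icc 1 j, (1 / (Nat.factorial ℓ : ℝ)) * (A ℓ (fun _ => s) - B ℓ (fun _ => s))|
        ≤ ∑ ℓ ∈ Finset.Icc 1 j, |(1 / (Nat.factorial ℓ : ℝ)) * (A ℓ (fun _ => s) - B ℓ (fun _ => s))| :=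
          Finset.abs_sum_le_sum_abs _ _
      _ ≤ ∑ ℓ ∈ Finset.Icc 1 j, (1 / (Nat.factorial ℓ : ℝ)) * ((ω/3) * ΔTb) := by
          apply Finset.sum_le_sum
          intro ℓ hℓ
          rw [abs_mul]
          have hfac : |(1 / (Nat.factorial ℓ : ℝ))| = 1 / (Nat.factorial ℓ : ℝ) := by
            rw [abs_of_pos]; positivity
          rw [hfac]
          apply mul_le_mul_of_nonneg_left _ (by positivity)
          have h1 : A ℓ (fun _ => s) - B ℓ (fun _ => s) = -((B ℓ - A ℓ) (fun _ => s)) := by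
            simp [ContinuousMultilinearMap.sub_apply]
          rw [h1, abs_neg]
          have h2 : |(B ℓ - A ℓ) (fun _ => s)| ≤ ‖B ℓ - A ℓ‖ * ‖s‖ ^ ℓ := by
            have := (B ℓ - A ℓ).le_opNorm (fun _ => s)
            simpa [Real.norm_eq_abs] using this
          calc |(B ℓ - A ℓ) (fun _ => s)| ≤ ‖B ℓ - A ℓ‖ * ‖s‖ ^ ℓ := h2
            _ ≤ ((ω / (3 * ‖s‖ ^ ℓ)) * ΔTb) * ‖s‖ ^ ℓ := by
                apply mul_le_mul_of_nonneg_right (herr ℓ hℓ) (by positivity)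
            _ = (ω/3) * ΔTb := by
                have hne : ‖s‖ ^ ℓ ≠ 0 := by positivity
                field_simp
      _ = (1 / 3) * (∑ ℓ ∈ Finset.Icc 1 j, 1 / (Nat.factorial ℓ : ℝ)) * ω * ΔTb := by
          rw [← Finset.sum_mul]
          ring
  · have : (1 / 3) * (∑ ℓ ∈ Finset.Icc 1 j, 1 / (Nat.factorial ℓ : ℝ)) < 1 := by linarith
    nlinarith [mul_pos hω0 hΔTbpos]
end
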